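/- Let G ⊂ ℂ^{n−1} be a domain and 𝔻 the unit disk, and let c denote the Carathéodory pseudodistance. Then for all a, z ∈ G and λ ∈ 𝔻, c_{G×𝔻}((a,0),(z,λ)) = max{c_G(a,z), c_𝔻(0,λ)}. In particular, for every r > 0, the Carathéodory ball satisfies B_{c_{G×𝔻}}((a,0); r) = B_{c_G}(a; r) × B_{c_𝔻}(0; r). -/

import Mathlib

open Complex Metric Set

/-- The Poincaré distance on the unit disk. -/
noncomputable def poincareDist (a b : ℂ) : ℝ :=
  (1 / 2) * Real.log
    ((1 + ‖a - b‖ / ‖1 - (starRingEnd ℂ) a * b‖) /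
     (1 - ‖a - b‖ / ‖1 - (starRingEnd ℂ) a * b‖))

/-- The Carathéodory pseudodistance of a domain D in a complex normed space. -/
noncomputable def carDist {E : Type*} [NormedAddCommGroup E] [NormedSpace ℂ E]
    (D : Set E) (p q : E) : ℝ :=
  sSup {r : ℝ | ∃ f : E → ℂ, DifferentiableOn ℂ f D ∧
    Set.MapsTo f D (ball (0 : ℂ) 1) ∧ r = poincareDist (f p) (f q)}

/-- The complex absolute value, as an `AbsoluteValue` (compatibility). -/
noncomputable def Complex.abs : AbsoluteValue ℂ ℝ := NormedField.toAbsoluteValue ℂ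

@[simp] theorem Complex.norm_eq_abs (z : ℂ) : ‖z‖ = Complex.abs z := rfl

theorem Complex.sq_abs (z : ℂ) : Complex.abs z ^ 2 = Complex.normSq z := Complex.sq_norm z

@[simp] theorem Complex.abs_conj (z : ℂ) : Complex.abs ((starRingEnd ℂ) z) = Complex.abs z :=
  Complex.norm_conj z

@[simp] theorem Complex.abs_ofReal (r : ℝ) : Complex.abs (r : ℂ) = |r| :=
  (Complex.norm_real r).trans (Real.norm_eq_abs r)

theorem Complex.abs_re_le_abs (z : ℂ) : |z.re| ≤ Complex.abs z := Complex.abs_re_le_norm z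

theorem Complex.abs_le_abs_of_mapsTo_ball_self {f : ℂ → ℂ} {z : ℂ} {R : ℝ}
    (hd : DifferentiableOn ℂ f (ball 0 R)) (h_maps : MapsTo f (ball 0 R) (ball 0 R))
    (h₀ : f 0 = 0) (hz : Complex.abs z < R) : Complex.abs (f z) ≤ Complex.abs z :=
  Complex.norm_le_norm_of_mapsTo_ball hd (h_maps.mono_right ball_subset_closedBall) h₀ hz

namespace CaraAux

/-- `artanh`-type function. -/
noncomputable def ath (x : ℝ) : ℝ := (1 / 2) * Real.log ((1 + x) / (1 - x))

/-- pseudo-hyperbolic distance -/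
noncomputable def md (a b : ℂ) : ℝ :=
  Complex.abs (a - b) / Complex.abs (1 - (starRingEnd ℂ) a * b)

lemma poincare_eq (a b : ℂ) : poincareDist a b = ath (md a b) := rfl

lemma mem_disk {z : ℂ} : z ∈ ball (0 : ℂ) 1 ↔ Complex.abs z < 1 := by
  simp [Metric.mem_ball, Complex.dist_eq]

lemma normSq_key (a b : ℂ) :
    Complex.normSq (1 - (starRingEnd ℂ) a * b) - Complex.normSq (a - b)
      = (1 - Complex.normSq a) * (1 - Complex.normSq b) := by
  simp only [Complex.normSq_apply, Complex.sub_re, Complex.sub_im, Complex.mul_re,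
    Complex.mul_im, Complex.one_re, Complex.one_im, Complex.conj_re, Complex.conj_im]
  ring

lemma key_ineq {a b : ℂ} (ha : Complex.abs a < 1) (hb : Complex.abs b < 1) :
    Complex.abs (a - b) < Complex.abs (1 - (starRingEnd ℂ) a * b) := by
  have h1 : Complex.normSq a < 1 := by
    have := Complex.sq_abs a; nlinarith [Complex.abs.nonneg a]
  have h2 : Complex.normSq b < 1 := by
    have := Complex.sq_abs b; nlinarith [Complex.abs.nonneg b]
  have h3 := normSq_key a b
  have h4 : Complex.abs (a - b) ^ 2 < Complex.abs (1 - (starRingEnd ℂ) a * b) ^ 2 := by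
    rw [Complex.sq_abs, Complex.sq_abs]; nlinarith
  exact lt_of_pow_lt_pow_left₀ 2 (Complex.abs.nonneg _) h4

lemma denom_pos {a b : ℂ} (ha : Complex.abs a < 1) (hb : Complex.abs b < 1) :
    0 < Complex.abs (1 - (starRingEnd ℂ) a * b) :=
  lt_of_le_of_lt (Complex.abs.nonneg _) (key_ineq ha hb)

lemma denom_ne {a b : ℂ} (ha : Complex.abs a < 1) (hb : Complex.abs b < 1) :
    (1 : ℂ) - (starRingEnd ℂ) a * b ≠ 0 := by
  intro h
  have := denom_pos ha hb
  rw [h] at this; simp at this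

lemma md_nonneg (a b : ℂ) : 0 ≤ md a b := div_nonneg (Complex.abs.nonneg _) (Complex.abs.nonneg _)

lemma md_lt_one {a b : ℂ} (ha : Complex.abs a < 1) (hb : Complex.abs b < 1) : md a b < 1 :=
  (div_lt_one (denom_pos ha hb)).2 (key_ineq ha hb)

lemma md_self (a : ℂ) : md a a = 0 := by simp [md]

lemma md_zero_left (b : ℂ) : md 0 b = Complex.abs b := by simp [md]

lemma ath_zero : ath 0 = 0 := by simp [ath]

lemma ath_nonneg {x : ℝ} (h0 : 0 ≤ x) (h1 : x < 1) : 0 ≤ ath x := by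
  have : (1 : ℝ) ≤ (1 + x) / (1 - x) := by
    rw [le_div_iff₀ (by linarith)]; linarith
  have := Real.log_nonneg this
  unfold ath; linarith

lemma ath_le_ath {x y : ℝ} (h0 : 0 ≤ x) (hxy : x ≤ y) (h1 : y < 1) : ath x ≤ ath y := by
  have hx1 : x < 1 := lt_of_le_of_lt hxy h1
  have h1x : (0:ℝ) < 1 - x := by linarith
  have hd : (0 : ℝ) < (1 + x) / (1 - x) := by positivity
  have hle : (1 + x) / (1 - x) ≤ (1 + y) / (1 - y) := by
    rw [div_le_div_iff₀ (by linarith) (by linarith)]; nlinarith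
  have := Real.log_le_log hd hle
  unfold ath; linarith

lemma ath_max {x y : ℝ} (h0x : 0 ≤ x) (h0y : 0 ≤ y) (hx : x < 1) (hy : y < 1) :
    ath (max x y) = max (ath x) (ath y) := by
  rcases le_total x y with h | h
  · rw [max_eq_right h, max_eq_right (ath_le_ath h0x h hy)]
  · rw [max_eq_left h, max_eq_left (ath_le_ath h0y h hx)]

/-- Möbius transform of the disk. -/
noncomputable def mob (α z : ℂ) : ℂ := (z - α) / (1 - (starRingEnd ℂ) α * z)

lemma mob_self (α : ℂ) : mob α α = 0 := by simp [mob]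

lemma abs_mob_lt_one {α z : ℂ} (hα : Complex.abs α < 1) (hz : Complex.abs z < 1) :
    Complex.abs (mob α z) < 1 := by
  rw [mob, map_div₀, div_lt_one (denom_pos hα hz), Complex.abs.map_sub]
  exact key_ineq hα hz

lemma abs_mob_eq_md (α z : ℂ) : Complex.abs (mob α z) = md α z := by
  rw [mob, map_div₀, md, Complex.abs.map_sub]

-- Möbius invariance of md
lemma md_mob {α x y : ℂ} (hα : Complex.abs α < 1) (hx : Complex.abs x < 1)
    (hy : Complex.abs y < 1) : md (mob α x) (mob α y) = md x y := by
  have hdx : (1 : ℂ) - (starRingEnd ℂ) α * x ≠ 0 := denom_ne hα hx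
  have hdy : (1 : ℂ) - (starRingEnd ℂ) α * y ≠ 0 := denom_ne hα hy
  have hαα : (1 : ℂ) - (starRingEnd ℂ) α * α ≠ 0 := denom_ne hα hα
  have hxy : (1 : ℂ) - (starRingEnd ℂ) x * y ≠ 0 := denom_ne hx hy
  have hcdx : (1 : ℂ) - α * (starRingEnd ℂ) x ≠ 0 := by
    intro h
    apply hdx
    have := congrArg (starRingEnd ℂ) h
    simpa [map_sub, map_mul, Complex.conj_conj] using this
  have hconj : (starRingEnd ℂ) (mob α x) =
      ((starRingEnd ℂ) x - (starRingEnd ℂ) α) / (1 - α * (starRingEnd ℂ) x) := by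
    simp [mob, map_div₀, map_sub, map_mul, Complex.conj_conj]
  have h1 : mob α x - mob α y
      = ((x - y) * (1 - (starRingEnd ℂ) α * α)) /
        ((1 - (starRingEnd ℂ) α * x) * (1 - (starRingEnd ℂ) α * y)) := by
    rw [mob, mob, div_sub_div _ _ hdx hdy]; ring
  have h2 : (1 : ℂ) - (starRingEnd ℂ) (mob α x) * mob α y
      = ((1 - (starRingEnd ℂ) α * α) * (1 - (starRingEnd ℂ) x * y)) /
        ((1 - α * (starRingEnd ℂ) x) * (1 - (starRingEnd ℂ) α * y)) := by
    rw [hconj, mob, div_mul_div_comm, one_sub_div (mul_ne_zero hcdx hdy)]; ring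
  have habs : Complex.abs (1 - α * (starRingEnd ℂ) x)
      = Complex.abs (1 - (starRingEnd ℂ) α * x) := by
    have : (1 : ℂ) - α * (starRingEnd ℂ) x = (starRingEnd ℂ) (1 - (starRingEnd ℂ) α * x) := by
      simp [map_sub, map_mul, Complex.conj_conj]
    rw [this, Complex.abs_conj]
  rw [md, md, h1, h2, map_div₀, map_div₀, map_mul, map_mul, map_mul, map_mul, habs]
  have a1 : Complex.abs (1 - (starRingEnd ℂ) α * x) ≠ 0 := Complex.abs.ne_zero hdx
  have a2 : Complex.abs (1 - (starRingEnd ℂ) α * y) ≠ 0 := Complex.abs.ne_zero hdy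
  have a3 : Complex.abs (1 - (starRingEnd ℂ) α * α) ≠ 0 := Complex.abs.ne_zero hαα
  have a4 : Complex.abs (1 - (starRingEnd ℂ) x * y) ≠ 0 := Complex.abs.ne_zero hxy
  rw [div_div_div_cancel_right₀ (mul_ne_zero a1 a2), mul_comm (Complex.abs (1 - (starRingEnd ℂ) α * α)),
    mul_div_mul_right _ _ a3]

-- the Möbius "triangle" bound : |y| ≤ (|x| + md x y)/(1 + |x| md x y)
lemma abs_le_mob_bound {x y : ℂ} (hx : Complex.abs x < 1) (hy : Complex.abs y < 1) :
    Complex.abs y ≤ (Complex.abs x + md x y) / (1 + Complex.abs x * md x y) := by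
  set v : ℂ := mob x y with hv
  have hvlt : Complex.abs v < 1 := abs_mob_lt_one hx hy
  have hmd : md x y = Complex.abs v := by rw [hv, mob, map_div₀, md, Complex.abs.map_sub]
  have hd : (1 : ℂ) - (starRingEnd ℂ) x * y ≠ 0 := denom_ne hx hy
  have hden2 : (1 : ℂ) + (starRingEnd ℂ) x * v ≠ 0 := by
    have : (1 : ℂ) + (starRingEnd ℂ) x * v = 1 - (starRingEnd ℂ) x * (-v) := by ring
    rw [this]
    exact denom_ne hx (by rwa [Complex.abs.map_neg])
  have hxx : (1 : ℂ) - (starRingEnd ℂ) x * x ≠ 0 := denom_ne hx hx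
  have hxx' : (1 : ℂ) - x * (starRingEnd ℂ) x ≠ 0 := by
    intro h; apply hxx
    have := congrArg (starRingEnd ℂ) h
    simpa [map_sub, map_mul, Complex.conj_conj] using this
  have heq : x + v = y * (1 + (starRingEnd ℂ) x * v) := by
    rw [hv, mob]
    linear_combination div_mul_cancel₀ (y - x) hd
  have hyrep : y = (x + v) / (1 + (starRingEnd ℂ) x * v) := by
    rw [heq, mul_div_cancel_right₀ _ hden2]
  have hX2 : Complex.abs x ^ 2 = Complex.normSq x := Complex.sq_abs x
  have hV2 : Complex.abs v ^ 2 = Complex.normSq v := Complex.sq_abs v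
  set X := Complex.abs x
  set V := Complex.abs v
  set s : ℝ := (x * (starRingEnd ℂ) v).re with hs
  have hA : Complex.abs (x + v) ^ 2 = X ^ 2 + V ^ 2 + 2 * s := by
    rw [Complex.sq_abs, Complex.normSq_add, hs, ← Complex.sq_abs, ← Complex.sq_abs]
  have hB : Complex.abs (1 + (starRingEnd ℂ) x * v) ^ 2 = 1 + X ^ 2 * V ^ 2 + 2 * s := by
    rw [Complex.sq_abs, Complex.normSq_add]
    have h1 : Complex.normSq ((starRingEnd ℂ) x * v) = Complex.normSq x * Complex.normSq v := by
      rw [Complex.normSq_mul, Complex.normSq_conj]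
    have h2 : ((1 : ℂ) * (starRingEnd ℂ) ((starRingEnd ℂ) x * v)).re = s := by
      rw [one_mul, map_mul, Complex.conj_conj]
    rw [h1, h2, ← hX2, ← hV2, Complex.normSq_one]
  have hs_le : s ≤ X * V := by
    have := Complex.abs_re_le_abs (x * (starRingEnd ℂ) v)
    have h3 : Complex.abs (x * (starRingEnd ℂ) v) = X * V := by
      rw [map_mul, Complex.abs_conj]
    rw [h3] at this
    exact le_trans (le_abs_self s) this
  have hX0 : 0 ≤ X := Complex.abs.nonneg x
  have hV0 : 0 ≤ V := Complex.abs.nonneg v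
  have hA0 : 0 ≤ Complex.abs (x + v) := Complex.abs.nonneg _
  have hB0 : 0 ≤ Complex.abs (1 + (starRingEnd ℂ) x * v) := Complex.abs.nonneg _
  -- squared inequality
  have hsq : (Complex.abs (x + v) * (1 + X * V)) ^ 2
      ≤ ((X + V) * Complex.abs (1 + (starRingEnd ℂ) x * v)) ^ 2 := by
    have expand : (Complex.abs (x + v) * (1 + X * V)) ^ 2
        = (X ^ 2 + V ^ 2 + 2 * s) * (1 + X * V) ^ 2 := by rw [mul_pow, hA]
    have expand2 : ((X + V) * Complex.abs (1 + (starRingEnd ℂ) x * v)) ^ 2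
        = (X + V) ^ 2 * (1 + X ^ 2 * V ^ 2 + 2 * s) := by rw [mul_pow, hB]
    rw [expand, expand2]
    nlinarith [mul_nonneg (mul_nonneg (mul_nonneg (sub_nonneg.2 hs_le)
      (sub_nonneg.2 hx.le)) (sub_nonneg.2 hvlt.le))
      (by nlinarith : (0:ℝ) ≤ 1 + X + V + X * V)]
  have hineq : Complex.abs (x + v) * (1 + X * V) ≤ (X + V) * Complex.abs (1 + (starRingEnd ℂ) x * v) := by
    have hb' : 0 ≤ (X + V) * Complex.abs (1 + (starRingEnd ℂ) x * v) := by positivity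
    nlinarith [hsq]
  have hBpos : 0 < Complex.abs (1 + (starRingEnd ℂ) x * v) :=
    Complex.abs.pos hden2
  have hden_pos : (0:ℝ) < 1 + X * V := by nlinarith
  rw [hmd, hyrep, map_div₀]
  rw [div_le_div_iff₀ hBpos hden_pos]
  linarith [hineq]

lemma md_comm (a b : ℂ) : md a b = md b a := by
  unfold md
  rw [Complex.abs.map_sub]
  congr 1
  have h : (1 : ℂ) - (starRingEnd ℂ) b * a = (starRingEnd ℂ) (1 - (starRingEnd ℂ) a * b) := by
    rw [map_sub, map_one, map_mul, Complex.conj_conj, mul_comm]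
  rw [h, Complex.abs_conj]

section NSU

variable {E : Type*} [NormedAddCommGroup E] [NormedSpace ℂ E] {D : Set E} {p q : E}

def NS (D : Set E) (p q : E) : Set ℝ :=
  {s | ∃ f : E → ℂ, DifferentiableOn ℂ f D ∧ MapsTo f D (ball (0 : ℂ) 1) ∧ f p = 0
    ∧ s = Complex.abs (f q)}

noncomputable def uu (D : Set E) (p q : E) : ℝ := sSup (NS D p q)

lemma NS_zero_mem : (0 : ℝ) ∈ NS D p q :=
  ⟨fun _ => 0, differentiableOn_const 0, fun x _ => mem_disk.2 (by simp), rfl, by simp⟩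

lemma NS_bdd (hq : q ∈ D) : BddAbove (NS D p q) := by
  refine ⟨1, ?_⟩
  rintro s ⟨f, _, hm, _, rfl⟩
  exact (mem_disk.1 (hm hq)).le

lemma uu_nonneg (hq : q ∈ D) : 0 ≤ uu D p q := le_csSup (NS_bdd hq) NS_zero_mem

lemma uu_le_one (hq : q ∈ D) : uu D p q ≤ 1 := by
  apply Real.sSup_le _ zero_le_one
  rintro s ⟨f, _, hm, _, rfl⟩
  exact (mem_disk.1 (hm hq)).le

lemma uu_self (hp : p ∈ D) : uu D p p = 0 := by
  refine le_antisymm ?_ (uu_nonneg hp)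
  apply Real.sSup_le _ le_rfl
  rintro s ⟨f, _, _, hfp, rfl⟩
  rw [hfp]; simp

lemma mob_comp {A : Type*} [NormedAddCommGroup A] [NormedSpace ℂ A] {s : Set A}
    {g : A → ℂ} (hg : DifferentiableOn ℂ g s) (hgm : ∀ x ∈ s, Complex.abs (g x) < 1)
    {α : ℂ} (hα : Complex.abs α < 1) :
    DifferentiableOn ℂ (fun x => mob α (g x)) s ∧
      (∀ x ∈ s, Complex.abs (mob α (g x)) < 1) := by
  constructor
  · simp only [mob, div_eq_mul_inv]
    exact (hg.sub (differentiableOn_const α)).mul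
      (((differentiableOn_const 1).sub (hg.const_mul ((starRingEnd ℂ) α))).inv
        (fun x hx => denom_ne hα (hgm x hx)))
  · exact fun x hx => abs_mob_lt_one hα (hgm x hx)

lemma md_step {w w' : E} {r : ℝ} (hr : 0 < r) (hball : ball w r ⊆ D)
    (hw' : w' ∈ ball w r) {f : E → ℂ} (hfd : DifferentiableOn ℂ f D)
    (hfm : MapsTo f D (ball (0 : ℂ) 1)) :
    md (f w) (f w') ≤ ‖w' - w‖ / r := by
  have hw : w ∈ D := hball (mem_ball_self hr)
  by_cases hne : w' = w
  · subst hne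
    rw [md_self]
    positivity
  · set d : E := w' - w with hdd
    have hd0 : d ≠ 0 := sub_ne_zero.2 hne
    have hnd : 0 < ‖d‖ := norm_pos_iff.2 hd0
    set v : E := ((r / ‖d‖ : ℝ) : ℂ) • d with hvdef
    have hnv : ‖v‖ = r := by
      rw [hvdef, norm_smul, Complex.norm_real, Real.norm_eq_abs,
        abs_of_pos (div_pos hr hnd)]
      field_simp
    set γ : ℂ → E := fun ζ => w + ζ • v with hγ
    have hγmaps : MapsTo γ (ball (0 : ℂ) 1) (ball w r) := by
      intro ζ hζ
      rw [mem_ball, dist_eq_norm]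
      have : γ ζ - w = ζ • v := by rw [hγ]; simp
      rw [this, norm_smul, hnv]
      have : ‖ζ‖ < 1 := by simpa [mem_ball, dist_eq_norm] using hζ
      nlinarith
    have hγdiff : DifferentiableOn ℂ γ (ball (0 : ℂ) 1) := by
      apply Differentiable.differentiableOn
      exact (differentiable_id.smul_const v).const_add w
    have hfγ : DifferentiableOn ℂ (fun ζ => f (γ ζ)) (ball (0 : ℂ) 1) :=
      hfd.comp hγdiff fun ζ hζ => hball (hγmaps hζ)
    have hfγm : ∀ ζ ∈ ball (0 : ℂ) 1, Complex.abs (f (γ ζ)) < 1 :=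
      fun ζ hζ => mem_disk.1 (hfm (hball (hγmaps hζ)))
    have hfw : Complex.abs (f w) < 1 := mem_disk.1 (hfm hw)
    obtain ⟨hqd, hqm⟩ := mob_comp hfγ hfγm hfw
    set Q : ℂ → ℂ := fun ζ => mob (f w) (f (γ ζ)) with hQ
    have hQ0 : Q 0 = 0 := by
      rw [hQ]
      have : γ 0 = w := by rw [hγ]; simp
      simp only [this, mob_self]
    set c : ℝ := ‖d‖ / r with hc
    have hc1 : c < 1 := by
      rw [hc, div_lt_one hr, hdd]
      simpa [mem_ball, dist_eq_norm] using hw'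
    have hγc : γ (c : ℂ) = w' := by
      simp only [hγ, hvdef]
      rw [smul_smul]
      have h5 : ((c : ℝ) : ℂ) * ((r / ‖d‖ : ℝ) : ℂ) = 1 := by
        rw [← Complex.ofReal_mul, hc]
        field_simp
        exact Complex.ofReal_one
      rw [h5, one_smul, hdd]
      abel
    have hc0 : (0:ℝ) ≤ c := by positivity
    have habs : Complex.abs ((c : ℝ) : ℂ) < 1 := by
      rw [Complex.abs_ofReal, _root_.abs_of_nonneg hc0]
      exact hc1
    have := Complex.abs_le_abs_of_mapsTo_ball_self hqd
      (fun ζ hζ => mem_disk.2 (hqm ζ hζ)) hQ0 habs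
    rw [hQ] at this
    simp only [hγc] at this
    rw [abs_mob_eq_md] at this
    calc md (f w) (f w') ≤ Complex.abs ((c : ℝ) : ℂ) := this
      _ ≤ ‖w' - w‖ / r := by
          rw [Complex.abs_ofReal, _root_.abs_of_nonneg hc0, hc, hdd]

lemma frac_mono2 {x y c d : ℝ} (hx0 : 0 ≤ x) (hxy : x ≤ y) (hy1 : y ≤ 1)
    (hc0 : 0 ≤ c) (hcd : c ≤ d) (hd1 : d ≤ 1) :
    (x + c) / (1 + x * c) ≤ (y + d) / (1 + y * d) := by
  have hcd1 : c * d ≤ 1 := by nlinarith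
  have hxy1 : x * y ≤ 1 := by nlinarith
  have h1 : 0 ≤ (y - x) * (1 - c * d) := mul_nonneg (by linarith) (by linarith)
  have h2 : 0 ≤ (d - c) * (1 - x * y) := mul_nonneg (by linarith) (by linarith)
  rw [div_le_div_iff₀ (by nlinarith) (by nlinarith)]
  nlinarith

lemma frac_lt_one {c x : ℝ} (hc0 : 0 ≤ c) (hc1 : c < 1) (hx : 0 ≤ x) (hx1 : x < 1) :
    (x + c) / (1 + x * c) < 1 := by
  rw [div_lt_one (by nlinarith)]
  nlinarith

lemma uu_step {w w' : E} {r : ℝ} (hr : 0 < r) (hball : ball w r ⊆ D)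
    (hw' : w' ∈ ball w r) :
    uu D p w' ≤ (uu D p w + ‖w' - w‖ / r) / (1 + uu D p w * (‖w' - w‖ / r)) := by
  have hw : w ∈ D := hball (mem_ball_self hr)
  have hw'D : w' ∈ D := hball hw'
  set c : ℝ := ‖w' - w‖ / r with hc
  have hc0 : 0 ≤ c := by positivity
  have hc1 : c < 1 := by
    rw [hc, div_lt_one hr]
    simpa [mem_ball, dist_eq_norm] using hw'
  have hu0 : 0 ≤ uu D p w := uu_nonneg hw
  apply Real.sSup_le _ (by positivity)
  rintro s ⟨f, hfd, hfm, hfp, rfl⟩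
  have hXlt : Complex.abs (f w) < 1 := mem_disk.1 (hfm hw)
  have hX'lt : Complex.abs (f w') < 1 := mem_disk.1 (hfm hw'D)
  have h1 := abs_le_mob_bound hXlt hX'lt
  have h2 : md (f w) (f w') ≤ c := md_step hr hball hw' hfd hfm
  have hXu : Complex.abs (f w) ≤ uu D p w := le_csSup (NS_bdd hw) ⟨f, hfd, hfm, hfp, rfl⟩
  calc Complex.abs (f w')
      ≤ (Complex.abs (f w) + md (f w) (f w')) / (1 + Complex.abs (f w) * md (f w) (f w')) := h1
    _ ≤ (uu D p w + c) / (1 + uu D p w * c) :=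
        frac_mono2 (Complex.abs.nonneg _) hXu (uu_le_one hw) (md_nonneg _ _) h2 hc1.le

lemma uu_step' {w w' : E} {r : ℝ} (hr : 0 < r) (hball : ball w r ⊆ D)
    (hw' : w' ∈ ball w r) :
    uu D p w ≤ (uu D p w' + ‖w' - w‖ / r) / (1 + uu D p w' * (‖w' - w‖ / r)) := by
  have hw : w ∈ D := hball (mem_ball_self hr)
  have hw'D : w' ∈ D := hball hw'
  set c : ℝ := ‖w' - w‖ / r with hc
  have hc0 : 0 ≤ c := by positivity
  have hc1 : c < 1 := by
    rw [hc, div_lt_one hr]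
    simpa [mem_ball, dist_eq_norm] using hw'
  have hu0 : 0 ≤ uu D p w' := uu_nonneg hw'D
  apply Real.sSup_le _ (by positivity)
  rintro s ⟨f, hfd, hfm, hfp, rfl⟩
  have hXlt : Complex.abs (f w) < 1 := mem_disk.1 (hfm hw)
  have hX'lt : Complex.abs (f w') < 1 := mem_disk.1 (hfm hw'D)
  have h1 := abs_le_mob_bound hX'lt hXlt
  have h2 : md (f w') (f w) ≤ c := by
    rw [md_comm]
    exact md_step hr hball hw' hfd hfm
  have hXu : Complex.abs (f w') ≤ uu D p w' := le_csSup (NS_bdd hw'D) ⟨f, hfd, hfm, hfp, rfl⟩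
  calc Complex.abs (f w)
      ≤ (Complex.abs (f w') + md (f w') (f w)) / (1 + Complex.abs (f w') * md (f w') (f w)) := h1
    _ ≤ (uu D p w' + c) / (1 + uu D p w' * c) :=
        frac_mono2 (Complex.abs.nonneg _) hXu (uu_le_one hw'D) (md_nonneg _ _) h2 hc1.le

lemma uu_lt_one (hD : IsOpen D) (hDc : IsPreconnected D) (hp : p ∈ D) (hq : q ∈ D) :
    uu D p q < 1 := by
  set A : Set E := {w | w ∈ D ∧ uu D p w < 1} with hA
  set B : Set E := {w | w ∈ D ∧ ¬ uu D p w < 1} with hB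
  have hAopen : IsOpen A := by
    rw [Metric.isOpen_iff]
    rintro w ⟨hwD, hwu⟩
    obtain ⟨r, hr, hball⟩ := Metric.isOpen_iff.1 hD w hwD
    refine ⟨r, hr, fun w' hw' => ⟨hball hw', ?_⟩⟩
    have hc1 : ‖w' - w‖ / r < 1 := by
      rw [div_lt_one hr]
      simpa [mem_ball, dist_eq_norm] using hw'
    exact lt_of_le_of_lt (uu_step hr hball hw')
      (frac_lt_one (by positivity) hc1 (uu_nonneg hwD) hwu)
  have hBopen : IsOpen B := by
    rw [Metric.isOpen_iff]
    rintro w ⟨hwD, hwu⟩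
    obtain ⟨r, hr, hball⟩ := Metric.isOpen_iff.1 hD w hwD
    refine ⟨r, hr, fun w' hw' => ⟨hball hw', ?_⟩⟩
    intro hlt
    apply hwu
    have hc1 : ‖w' - w‖ / r < 1 := by
      rw [div_lt_one hr]
      simpa [mem_ball, dist_eq_norm] using hw'
    exact lt_of_le_of_lt (uu_step' hr hball hw')
      (frac_lt_one (by positivity) hc1 (uu_nonneg (hball hw')) hlt)
  have hdisj : Disjoint A B := by
    rw [Set.disjoint_left]
    rintro w ⟨_, h1⟩ ⟨_, h2⟩
    exact h2 h1
  have hsub : D ⊆ A ∪ B := by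
    intro w hw
    by_cases h : uu D p w < 1
    · exact Or.inl ⟨hw, h⟩
    · exact Or.inr ⟨hw, h⟩
  have hne : (D ∩ A).Nonempty := by
    refine ⟨p, hp, hp, ?_⟩
    rw [uu_self hp]
    norm_num
  have := IsPreconnected.subset_left_of_subset_union hAopen hBopen hdisj hsub hne hDc
  exact (this hq).2

end NSU

lemma annulus_bound {h : ℂ → ℂ} (hd : DifferentiableOn ℂ h (ball 0 1))
    (hm : ∀ ν ∈ ball (0 : ℂ) 1, Complex.abs (h ν) < 1)
    {σ' r C : ℝ} (hσp : 0 < σ') (hsr : σ' < r) (hr1 : r < 1)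
    (hinner : ∀ ν : ℂ, Complex.abs ν = σ' → Complex.abs (h ν) ≤ C * σ')
    (hC : 1 / r ≤ C)
    {lam : ℂ} (hin : σ' < Complex.abs lam) (hout : Complex.abs lam < r) :
    Complex.abs (h lam) ≤ C * Complex.abs lam := by
  have hr0 : (0:ℝ) < r := lt_trans hσp hsr
  have hC0 : 0 < C := lt_of_lt_of_le (by positivity) hC
  set U : Set ℂ := ball 0 r \ closedBall 0 σ' with hU
  have hUsub : U ⊆ ball (0:ℂ) 1 := fun x hx => ball_subset_ball hr1.le hx.1
  have hUne : ∀ x ∈ U, x ≠ 0 := by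
    rintro x ⟨_, hx2⟩ rfl
    exact hx2 (mem_closedBall_self hσp.le)
  have hbd : Bornology.IsBounded U := Metric.isBounded_ball.subset diff_subset
  have hdiffU : DifferentiableOn ℂ (fun ν => h ν / ν) U :=
    DifferentiableOn.div (hd.mono hUsub) differentiableOn_id hUne
  have hclos : closure U ⊆ closedBall (0:ℂ) r \ ball 0 σ' := by
    intro x hx
    refine ⟨closure_minimal (fun y (hy : y ∈ U) => ball_subset_closedBall hy.1)
      Metric.isClosed_closedBall hx, ?_⟩
    have h2 : closure U ⊆ (ball (0:ℂ) σ')ᶜ :=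
      closure_minimal (fun y (hy : y ∈ U) hyb => hy.2 (ball_subset_closedBall hyb))
        Metric.isOpen_ball.isClosed_compl
    exact h2 hx
  have hcont : ContinuousOn (fun ν => h ν / ν) (closure U) := by
    apply ContinuousOn.div
    · exact (hd.continuousOn).mono (fun x hx => (closedBall_subset_ball hr1) (hclos hx).1)
    · exact continuousOn_id
    · intro x hx hx0
      have := (hclos hx).2
      rw [hx0] at this
      exact this (mem_ball_self hσp)
  have hdc : DiffContOnCl ℂ (fun ν => h ν / ν) U := ⟨hdiffU, hcont⟩
  have hfr : frontier U ⊆ sphere (0:ℂ) r ∪ sphere (0:ℂ) σ' := by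
    rw [hU, Set.diff_eq]
    intro y hy
    rcases frontier_inter_subset (ball (0:ℂ) r) (closedBall (0:ℂ) σ')ᶜ hy with h1 | h1
    · left
      rw [← frontier_ball (0:ℂ) (ne_of_gt hr0)]
      exact h1.1
    · right
      have := h1.2
      rwa [frontier_compl, frontier_closedBall (0:ℂ) (ne_of_gt hσp)] at this
  have hfront : ∀ x ∈ frontier U, ‖h x / x‖ ≤ C := by
    intro x hx
    rcases hfr hx with hs | hs
    · have hxr : Complex.abs x = r := by
        rw [mem_sphere_iff_norm, sub_zero] at hs
        simpa [Complex.norm_eq_abs] using hs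
      have hx1 : x ∈ ball (0:ℂ) 1 := mem_disk.2 (by rw [hxr]; exact hr1)
      have hle1 : Complex.abs (h x) ≤ 1 := (hm x hx1).le
      rw [Complex.norm_eq_abs, map_div₀, hxr]
      calc Complex.abs (h x) / r ≤ 1 / r := by gcongr
        _ ≤ C := hC
    · have hxσ : Complex.abs x = σ' := by
        rw [mem_sphere_iff_norm, sub_zero] at hs
        simpa [Complex.norm_eq_abs] using hs
      rw [Complex.norm_eq_abs, map_div₀, hxσ, div_le_iff₀ hσp]
      exact hinner x hxσ
  have hlamU : lam ∈ U := by
    constructor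
    · rw [mem_ball, Complex.dist_eq, sub_zero]
      exact hout
    · intro hmem
      rw [mem_closedBall, Complex.dist_eq, sub_zero] at hmem
      linarith [show ‖lam‖ = Complex.abs lam from rfl]
  have hmain := Complex.norm_le_of_forall_mem_frontier_norm_le hbd hdc hfront
    (subset_closure hlamU)
  rw [Complex.norm_eq_abs, map_div₀] at hmain
  have hlam0 : 0 < Complex.abs lam := lt_trans hσp hin
  rw [div_le_iff₀ hlam0] at hmain
  exact hmain

section Pointwise

variable {E : Type*} [NormedAddCommGroup E] [NormedSpace ℂ E] {D : Set E}

set_option maxHeartbeats 2000000 in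
lemma pointwise {a z : E} (hz : z ∈ D)
    {lam : ℂ} (hlam : Complex.abs lam < 1)
    {F : E × ℂ → ℂ} (hFd : DifferentiableOn ℂ F (D ×ˢ ball 0 1))
    (hFm : MapsTo F (D ×ˢ ball 0 1) (ball (0:ℂ) 1))
    (hF0 : F (a, 0) = 0) :
    Complex.abs (F (z, lam)) ≤ max (uu D a z) (Complex.abs lam) := by
  have hσ0 : 0 ≤ uu D a z := uu_nonneg hz
  -- step (i)
  have step1 : ∀ ν : ℂ, Complex.abs ν < uu D a z → Complex.abs (F (z, ν)) ≤ uu D a z := by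
    intro ν hν
    have hν' : Complex.abs ν < sSup (NS D a z) := hν
    obtain ⟨s, hsNS, hslt⟩ := exists_lt_of_lt_csSup ⟨0, NS_zero_mem⟩ hν'
    obtain ⟨f, hfd, hfm, hfa, rfl⟩ := hsNS
    have hfz0 : f z ≠ 0 := by
      intro h0
      rw [h0] at hslt
      simp only [map_zero] at hslt
      exact absurd hslt (not_lt.2 (Complex.abs.nonneg ν))
    set c : ℂ := ν / f z with hc
    have hc1 : Complex.abs c < 1 := by
      rw [hc, map_div₀, div_lt_one (Complex.abs.pos hfz0)]
      exact hslt
    have hgmapsP : MapsTo (fun w => (w, c * f w)) D (D ×ˢ ball (0:ℂ) 1) := by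
      intro w hw
      refine ⟨hw, mem_disk.2 ?_⟩
      rw [map_mul]
      have hfw : Complex.abs (f w) < 1 := mem_disk.1 (hfm hw)
      calc Complex.abs c * Complex.abs (f w)
          ≤ Complex.abs c := mul_le_of_le_one_right (Complex.abs.nonneg c) hfw.le
        _ < 1 := hc1
    have hgd : DifferentiableOn ℂ (fun w => F (w, c * f w)) D :=
      hFd.comp (differentiableOn_id.prodMk (hfd.const_mul c)) hgmapsP
    have hgm : MapsTo (fun w => F (w, c * f w)) D (ball (0:ℂ) 1) :=
      fun w hw => hFm (hgmapsP hw)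
    have hga : F (a, c * f a) = 0 := by rw [hfa, mul_zero, hF0]
    have hmem : Complex.abs (F (z, c * f z)) ∈ NS D a z :=
      ⟨fun w => F (w, c * f w), hgd, hgm, hga, rfl⟩
    have hle : Complex.abs (F (z, c * f z)) ≤ uu D a z := le_csSup (NS_bdd hz) hmem
    have hcv : c * f z = ν := by rw [hc, div_mul_cancel₀ _ hfz0]
    rwa [hcv] at hle
  -- the slice function
  have hhd : DifferentiableOn ℂ (fun ν => F (z, ν)) (ball (0:ℂ) 1) :=
    hFd.comp ((differentiableOn_const z).prodMk differentiableOn_id) (fun ν hν => ⟨hz, hν⟩)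
  have hhm : ∀ ν ∈ ball (0:ℂ) 1, Complex.abs (F (z, ν)) < 1 :=
    fun ν hν => mem_disk.1 (hFm ⟨hz, hν⟩)
  have hh0 : Complex.abs (F (z, 0)) ≤ uu D a z := by
    have hmem : Complex.abs (F (z, 0)) ∈ NS D a z := by
      refine ⟨fun w => F (w, 0), ?_, ?_, hF0, rfl⟩
      · exact hFd.comp (differentiableOn_id.prodMk (differentiableOn_const 0))
          (fun w hw => ⟨hw, mem_disk.2 (by simp)⟩)
      · exact fun w hw => hFm ⟨hw, mem_disk.2 (by simp)⟩
    exact le_csSup (NS_bdd hz) hmem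
  rcases lt_or_ge (Complex.abs lam) (uu D a z) with hcase | hcase
  · exact (step1 lam hcase).trans (le_max_left _ _)
  · refine le_trans ?_ (le_max_right _ _)
    rcases eq_or_lt_of_le hσ0 with hσz | hσpos
    · -- uu = 0 : Schwarz lemma
      have hh00 : F (z, (0:ℂ)) = 0 := by
        have h1 := hh0
        rw [← hσz] at h1
        exact Complex.abs.eq_zero.1 (le_antisymm h1 (Complex.abs.nonneg _))
      exact Complex.abs_le_abs_of_mapsTo_ball_self hhd
        (fun ν hν => mem_disk.2 (hhm ν hν)) hh00 hlam
    · have hlam0 : 0 < Complex.abs lam := lt_of_lt_of_le hσpos hcase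
      have key : ∀ ε : ℝ, 0 < ε → Complex.abs (F (z, lam)) ≤ (1 + ε) * Complex.abs lam := by
        intro ε hε
        set σ' : ℝ := uu D a z / (1 + ε) with hσ'
        have hσ'pos : 0 < σ' := by rw [hσ']; positivity
        have hσ'lt : σ' < uu D a z := by
          rw [hσ', div_lt_iff₀ (by linarith)]
          nlinarith
        have hσ'lam : σ' < Complex.abs lam := lt_of_lt_of_le hσ'lt hcase
        set M : ℝ := max (Complex.abs lam) (1/(1+ε)) with hM
        have hM1 : M < 1 := by
          apply max_lt hlam
          rw [div_lt_one (by linarith)]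
          linarith
        set r : ℝ := (M + 1)/2 with hr
        have hMnn : 0 ≤ M := le_trans hlam0.le (le_max_left _ _)
        have hrM : M < r := by rw [hr]; linarith
        have hr1 : r < 1 := by rw [hr]; linarith
        have hlamr : Complex.abs lam < r := lt_of_le_of_lt (le_max_left _ _) hrM
        have hσ'r : σ' < r := lt_trans hσ'lam hlamr
        have hC : 1/r ≤ 1 + ε := by
          have h2 : 1/(1+ε) < r := lt_of_le_of_lt (le_max_right _ _) hrM
          rw [div_lt_iff₀ (by linarith)] at h2
          rw [div_le_iff₀ (by linarith : (0:ℝ) < r)]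
          nlinarith
        have hinner : ∀ ν : ℂ, Complex.abs ν = σ' → Complex.abs (F (z, ν)) ≤ (1+ε) * σ' := by
          intro ν hν
          have hlt : Complex.abs ν < uu D a z := by rw [hν]; exact hσ'lt
          have hb := step1 ν hlt
          have hσeq : (1+ε) * σ' = uu D a z := by
            rw [hσ']
            field_simp
          rw [hσeq]
          exact hb
        exact annulus_bound hhd hhm hσ'pos hσ'r hr1 hinner hC hσ'lam hlamr
      refine le_of_forall_pos_le_add ?_
      intro ε hε
      have hεl : 0 < ε / Complex.abs lam := by positivity
      have hk := key (ε / Complex.abs lam) hεl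
      have heq : (1 + ε / Complex.abs lam) * Complex.abs lam = Complex.abs lam + ε := by
        field_simp
      rw [heq] at hk
      exact hk

end Pointwise

section Main

lemma poincare_zero (b : ℂ) : poincareDist 0 b = ath (Complex.abs b) := by
  rw [poincare_eq, md_zero_left]

lemma poincare_as_mob {x y : ℂ} (hx : Complex.abs x < 1) (hy : Complex.abs y < 1) :
    poincareDist x y = ath (Complex.abs (mob x y)) := by
  have h1 : poincareDist (mob x x) (mob x y) = poincareDist x y := by
    rw [poincare_eq, poincare_eq, md_mob hx hx hy]
  rw [← h1, mob_self, poincare_zero]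

variable {E : Type*} [NormedAddCommGroup E] [NormedSpace ℂ E]

def CS (D : Set E) (p q : E) : Set ℝ :=
  {r : ℝ | ∃ f : E → ℂ, DifferentiableOn ℂ f D ∧ Set.MapsTo f D (ball (0 : ℂ) 1) ∧
    r = poincareDist (f p) (f q)}

lemma carDist_eq (D : Set E) (p q : E) : carDist D p q = sSup (CS D p q) := rfl

lemma CS_zero_mem (D : Set E) (p q : E) : (0:ℝ) ∈ CS D p q := by
  refine ⟨fun _ => 0, differentiableOn_const 0, fun x _ => mem_disk.2 (by simp), ?_⟩
  rw [poincare_eq, md_self, ath_zero]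

set_option maxHeartbeats 2000000 in
lemma cara_formula {D : Set E} (hD : IsOpen D) (hDc : IsPreconnected D)
    {a z : E} (ha : a ∈ D) (hz : z ∈ D) {lam : ℂ} (hlam : lam ∈ ball (0:ℂ) 1) :
    carDist (D ×ˢ ball (0 : ℂ) 1) (a, 0) (z, lam)
      = max (carDist D a z) (carDist (ball (0 : ℂ) 1) 0 lam) := by
  have hlam1 : Complex.abs lam < 1 := mem_disk.1 hlam
  have hσ1 : uu D a z < 1 := uu_lt_one hD hDc ha hz
  have hσ0 : 0 ≤ uu D a z := uu_nonneg hz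
  have ht0 : 0 ≤ Complex.abs lam := Complex.abs.nonneg lam
  have hmax1 : max (uu D a z) (Complex.abs lam) < 1 := max_lt hσ1 hlam1
  have hmax0 : 0 ≤ max (uu D a z) (Complex.abs lam) := le_trans hσ0 (le_max_left _ _)
  have hP : (a, (0:ℂ)) ∈ D ×ˢ ball (0:ℂ) 1 := ⟨ha, mem_disk.2 (by simp)⟩
  have hQ : (z, lam) ∈ D ×ˢ ball (0:ℂ) 1 := ⟨hz, hlam⟩
  -- upper bound on elements of the big set
  have big_le : ∀ x ∈ CS (D ×ˢ ball (0:ℂ) 1) (a, 0) (z, lam),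
      x ≤ ath (max (uu D a z) (Complex.abs lam)) := by
    rintro x ⟨F, hFd, hFm, rfl⟩
    have hFp : Complex.abs (F (a, 0)) < 1 := mem_disk.1 (hFm hP)
    have hFq : Complex.abs (F (z, lam)) < 1 := mem_disk.1 (hFm hQ)
    rw [poincare_as_mob hFp hFq]
    obtain ⟨hGd, hGm⟩ := mob_comp (s := D ×ˢ ball (0:ℂ) 1) hFd
      (fun y hy => mem_disk.1 (hFm hy)) hFp
    have hG0 : (fun y => mob (F (a, 0)) (F y)) (a, 0) = 0 := mob_self _
    have hbound := pointwise hz hlam1 hGd (fun y hy => mem_disk.2 (hGm y hy)) hG0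
    exact ath_le_ath (Complex.abs.nonneg _) hbound hmax1
  have big_bdd : BddAbove (CS (D ×ˢ ball (0:ℂ) 1) (a, 0) (z, lam)) :=
    ⟨ath (max (uu D a z) (Complex.abs lam)), fun x hx => big_le x hx⟩
  have big_le' : carDist (D ×ˢ ball (0:ℂ) 1) (a, 0) (z, lam)
      ≤ ath (max (uu D a z) (Complex.abs lam)) :=
    Real.sSup_le big_le (ath_nonneg hmax0 hmax1)
  -- carDist D a z = ath (uu D a z)
  have cG_le : ∀ x ∈ CS D a z, x ≤ ath (uu D a z) := by
    rintro x ⟨f, hfd, hfm, rfl⟩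
    have hfa : Complex.abs (f a) < 1 := mem_disk.1 (hfm ha)
    have hfz : Complex.abs (f z) < 1 := mem_disk.1 (hfm hz)
    rw [poincare_as_mob hfa hfz]
    obtain ⟨hgd, hgm⟩ := mob_comp hfd (fun y hy => mem_disk.1 (hfm hy)) hfa
    have hmem : Complex.abs (mob (f a) (f z)) ∈ NS D a z :=
      ⟨fun w => mob (f a) (f w), hgd, fun w hw => mem_disk.2 (hgm w hw), mob_self _, rfl⟩
    exact ath_le_ath (Complex.abs.nonneg _) (le_csSup (NS_bdd hz) hmem) hσ1
  have cG_le' : carDist D a z ≤ ath (uu D a z) :=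
    Real.sSup_le cG_le (ath_nonneg hσ0 hσ1)
  have cG_bdd : BddAbove (CS D a z) := ⟨ath (uu D a z), fun x hx => cG_le x hx⟩
  have cG_ge : ath (uu D a z) ≤ carDist D a z := by
    refine le_of_forall_pos_le_add ?_
    intro ε hε
    have hcont : ContinuousAt ath (uu D a z) := by
      have h1 : (1:ℝ) - uu D a z ≠ 0 := by linarith
      have h2 : (1 + uu D a z)/(1 - uu D a z) ≠ 0 := by
        have : (0:ℝ) < (1 + uu D a z)/(1 - uu D a z) := by
          apply div_pos <;> linarith
        linarith
      have hfrac : ContinuousAt (fun x : ℝ => (1+x)/(1-x)) (uu D a z) :=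
        ContinuousAt.div (continuousAt_const.add continuousAt_id)
          (continuousAt_const.sub continuousAt_id) h1
      have hlog := ContinuousAt.comp (g := Real.log) (f := fun x : ℝ => (1+x)/(1-x))
        (x := uu D a z) (Real.continuousAt_log h2) hfrac
      exact continuousAt_const.mul hlog
    obtain ⟨δ, hδ, hcd⟩ := Metric.continuousAt_iff.1 hcont ε hε
    have hlt : uu D a z - δ/2 < sSup (NS D a z) := by
      have : uu D a z - δ/2 < uu D a z := by linarith
      exact this
    obtain ⟨s, hsNS, hslt⟩ := exists_lt_of_lt_csSup ⟨0, NS_zero_mem⟩ hlt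
    have hsle : s ≤ uu D a z := le_csSup (NS_bdd hz) hsNS
    have hdist : dist s (uu D a z) < δ := by
      rw [Real.dist_eq, abs_lt]
      constructor <;> linarith
    have hath := hcd hdist
    rw [Real.dist_eq, abs_lt] at hath
    obtain ⟨f, hfd, hfm, hfa, rfl⟩ := hsNS
    have hmem : ath (Complex.abs (f z)) ∈ CS D a z :=
      ⟨f, hfd, hfm, by rw [hfa, poincare_zero]⟩
    have h5 : ath (Complex.abs (f z)) ≤ carDist D a z := le_csSup cG_bdd hmem
    linarith [hath.1, hath.2]
  have cG_eq : carDist D a z = ath (uu D a z) := le_antisymm cG_le' cG_ge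
  -- carDist 𝔻 0 lam = ath |lam|
  have h00 : (0:ℂ) ∈ ball (0:ℂ) 1 := mem_disk.2 (by simp)
  have cD_le : ∀ x ∈ CS (ball (0:ℂ) 1) (0:ℂ) lam, x ≤ ath (Complex.abs lam) := by
    rintro x ⟨f, hfd, hfm, rfl⟩
    have hf0 : Complex.abs (f 0) < 1 := mem_disk.1 (hfm h00)
    have hfl : Complex.abs (f lam) < 1 := mem_disk.1 (hfm hlam)
    rw [poincare_as_mob hf0 hfl]
    obtain ⟨hgd, hgm⟩ := mob_comp hfd (fun y hy => mem_disk.1 (hfm hy)) hf0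
    have hg0 : (fun w => mob (f 0) (f w)) 0 = 0 := mob_self _
    have hs := Complex.abs_le_abs_of_mapsTo_ball_self hgd
      (fun w hw => mem_disk.2 (hgm w hw)) hg0 hlam1
    exact ath_le_ath (Complex.abs.nonneg _) hs hlam1
  have cD_le' : carDist (ball (0:ℂ) 1) 0 lam ≤ ath (Complex.abs lam) :=
    Real.sSup_le cD_le (ath_nonneg ht0 hlam1)
  have cD_bdd : BddAbove (CS (ball (0:ℂ) 1) (0:ℂ) lam) :=
    ⟨ath (Complex.abs lam), fun x hx => cD_le x hx⟩
  have cD_ge : ath (Complex.abs lam) ≤ carDist (ball (0:ℂ) 1) 0 lam := by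
    have hmem : ath (Complex.abs lam) ∈ CS (ball (0:ℂ) 1) (0:ℂ) lam := by
      refine ⟨fun w => w, differentiableOn_id, fun y hy => hy, ?_⟩
      rw [poincare_zero]
    exact le_csSup cD_bdd hmem
  have cD_eq : carDist (ball (0:ℂ) 1) 0 lam = ath (Complex.abs lam) :=
    le_antisymm cD_le' cD_ge
  -- lower bounds via liftings
  have hsub1 : CS D a z ⊆ CS (D ×ˢ ball (0:ℂ) 1) (a, 0) (z, lam) := by
    rintro x ⟨f, hfd, hfm, rfl⟩
    refine ⟨fun y => f y.1, ?_, fun y hy => hfm hy.1, rfl⟩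
    exact hfd.comp differentiable_fst.differentiableOn (fun y hy => hy.1)
  have hsub2 : CS (ball (0:ℂ) 1) (0:ℂ) lam ⊆ CS (D ×ˢ ball (0:ℂ) 1) (a, 0) (z, lam) := by
    rintro x ⟨f, hfd, hfm, rfl⟩
    refine ⟨fun y => f y.2, ?_, fun y hy => hfm hy.2, rfl⟩
    exact hfd.comp differentiable_snd.differentiableOn (fun y hy => hy.2)
  have hge1 : carDist D a z ≤ carDist (D ×ˢ ball (0:ℂ) 1) (a, 0) (z, lam) :=
    csSup_le_csSup big_bdd ⟨0, CS_zero_mem D a z⟩ hsub1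
  have hge2 : carDist (ball (0:ℂ) 1) 0 lam ≤ carDist (D ×ˢ ball (0:ℂ) 1) (a, 0) (z, lam) :=
    csSup_le_csSup big_bdd ⟨0, CS_zero_mem (ball (0:ℂ) 1) 0 lam⟩ hsub2
  -- conclude
  refine le_antisymm ?_ (max_le hge1 hge2)
  calc carDist (D ×ˢ ball (0:ℂ) 1) (a, 0) (z, lam)
      ≤ ath (max (uu D a z) (Complex.abs lam)) := big_le'
    _ = max (ath (uu D a z)) (ath (Complex.abs lam)) := ath_max hσ0 ht0 hσ1 hlam1
    _ = max (carDist D a z) (carDist (ball (0:ℂ) 1) 0 lam) := by rw [cG_eq, cD_eq]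

end Main

end CaraAux

/-- Product formula for the Carathéodory pseudodistance of G × 𝔻, and the
resulting product decomposition of Carathéodory balls. -/
theorem stmt8 (n : ℕ) (G : Set (Fin (n - 1) → ℂ)) (hopen : IsOpen G)
    (hconn : IsConnected G) (a z : Fin (n - 1) → ℂ) (ha : a ∈ G) (hz : z ∈ G)
    (lam : ℂ) (hlam : lam ∈ ball (0 : ℂ) 1) :
    carDist (G ×ˢ ball (0 : ℂ) 1) (a, 0) (z, lam) =
      max (carDist G a z) (carDist (ball (0 : ℂ) 1) 0 lam) ∧
    ∀ r > (0 : ℝ),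
      {x ∈ G ×ˢ ball (0 : ℂ) 1 | carDist (G ×ˢ ball (0 : ℂ) 1) (a, 0) x < r} =
        {w ∈ G | carDist G a w < r} ×ˢ
          {μ ∈ ball (0 : ℂ) 1 | carDist (ball (0 : ℂ) 1) 0 μ < r} := by
  have hpre := hconn.isPreconnected
  constructor
  · exact CaraAux.cara_formula hopen hpre ha hz hlam
  · intro r hr
    ext x
    obtain ⟨w, μ⟩ := x
    simp only [Set.mem_sep_iff, Set.mem_prod]
    constructor
    · rintro ⟨⟨hw, hμ⟩, hlt⟩
      rw [CaraAux.cara_formula hopen hpre ha hw hμ] at hlt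
      exact ⟨⟨hw, (max_lt_iff.1 hlt).1⟩, ⟨hμ, (max_lt_iff.1 hlt).2⟩⟩
    · rintro ⟨⟨hw, h1⟩, hμ, h2⟩
      refine ⟨⟨hw, hμ⟩, ?_⟩
      rw [CaraAux.cara_formula hopen hpre ha hw hμ]
      exact max_lt h1 h2
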